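/- Fix a depth i with 0 ≤ i ≤ n. Then the full trellis distribution θ^D(T) = Σ_{P : A → B} λ(P) · δ_{f(P)} satisfies θ^D(T) = Σ_{v : depth(v) = i} α^D(v) * β^D(v), where * denotes convolution of finitely supported functions. (Distribution decomposition, part of Theorem 6 of the paper.) -/

import Mathlib

open Finset

/-- `IsPath einit efin u v P` means the list of edges `P = e₁⋯e_L` is a path from
vertex `u` to vertex `v`: `init e₁ = u`, `fin e_L = v` and `fin e_j = init e_{j+1}`;
the empty list is a path from every vertex to itself. -/
def IsPath {V E : Type*} (einit efin : E → V) : V → V → List E → Prop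
  | u, v, [] => u = v
  | u, v, e :: es => einit e = u ∧ IsPath einit efin (efin e) v es

/-- The λ-label of a path: the product of the λ-labels of its edges. -/
noncomputable def pathLam {E : Type*} (lam : E → ℝ) (P : List E) : ℝ :=
  (P.map lam).prod

/-- The value `f(P)` of a path: the sum of the values `g(e)` of its edges. -/
noncomputable def pathF {E : Type*} (g : E → ℝ) (P : List E) : ℝ :=
  (P.map g).sum

/-- The `m`-th forward numerator `α^(m)(v) = Σ_{P : A → v} f(P)^m · λ(P)`. -/
noncomputable def alphaNum {V E : Type*} (lam g : E → ℝ)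
    (paths : V → V → Finset (List E)) (A : V) (m : ℕ) (v : V) : ℝ :=
  ∑ P ∈ paths A v, pathF g P ^ m * pathLam lam P

/-- The `m`-th backward numerator `β^(m)(v) = Σ_{P : v → B} f(P)^m · λ(P)`. -/
noncomputable def betaNum {V E : Type*} (lam g : E → ℝ)
    (paths : V → V → Finset (List E)) (B : V) (m : ℕ) (v : V) : ℝ :=
  ∑ P ∈ paths v B, pathF g P ^ m * pathLam lam P

/-- The forward distribution `α^D(v) = Σ_{P : A → v} λ(P) · δ_{f(P)}`
as a finitely supported function `ℝ →₀ ℝ`. -/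
noncomputable def alphaDist {V E : Type*} (lam g : E → ℝ)
    (paths : V → V → Finset (List E)) (A : V) (v : V) : ℝ →₀ ℝ :=
  ∑ P ∈ paths A v, pathLam lam P • Finsupp.single (pathF g P) (1 : ℝ)

/-- The backward distribution `β^D(v) = Σ_{P : v → B} λ(P) · δ_{f(P)}`. -/
noncomputable def betaDist {V E : Type*} (lam g : E → ℝ)
    (paths : V → V → Finset (List E)) (B : V) (v : V) : ℝ →₀ ℝ :=
  ∑ P ∈ paths v B, pathLam lam P • Finsupp.single (pathF g P) (1 : ℝ)

/-- Shift `a ⊞ b` of the domain of a finitely supported function `a` by `b`: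
`(a ⊞ b)(u) = a(u − b)`, i.e. `Σ_u a(u) · δ_{u+b}`. -/
noncomputable def fshift (a : ℝ →₀ ℝ) (b : ℝ) : ℝ →₀ ℝ :=
  Finsupp.mapDomain (fun u => u + b) a

/-- Convolution of finitely supported functions: `(a * b)(u) = Σ_{s+t=u} a(s) · b(t)`,
so that `δ_s * δ_t = δ_{s+t}` (multiplication in `AddMonoidAlgebra ℝ ℝ`). -/
noncomputable def conv (a b : ℝ →₀ ℝ) : ℝ →₀ ℝ :=
  a.sum fun s as => b.sum fun t bt => Finsupp.single (s + t) (as * bt)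


section Aux
variable {V E : Type*} (einit efin : E → V)

lemma isPath_append {u w v : V} {P₁ P₂ : List E}
    (h₁ : IsPath einit efin u w P₁) (h₂ : IsPath einit efin w v P₂) :
    IsPath einit efin u v (P₁ ++ P₂) := by
  induction P₁ generalizing u with
  | nil => simp only [IsPath] at h₁; subst h₁; simpa using h₂
  | cons e es ih => exact ⟨h₁.1, ih h₁.2⟩

lemma isPath_split {v : V} {P₁ P₂ : List E} : ∀ {u}, IsPath einit efin u v (P₁ ++ P₂) →
    ∃ w, IsPath einit efin u w P₁ ∧ IsPath einit efin w v P₂ := by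
  induction P₁ with
  | nil => intro u h; exact ⟨u, rfl, h⟩
  | cons e es ih =>
    intro u h
    obtain ⟨w, hw1, hw2⟩ := ih h.2
    exact ⟨w, ⟨h.1, hw1⟩, hw2⟩

lemma depth_of_isPath (depth : V → ℕ) (hdepth : ∀ e, depth (efin e) = depth (einit e) + 1)
    {P : List E} : ∀ {u v}, IsPath einit efin u v P → depth v = depth u + P.length := by
  induction P with
  | nil => intro u v h; cases h; simp
  | cons e es ih =>
    intro u v h
    rw [ih h.2, hdepth e, h.1]
    simp; ring

lemma isPath_unique {P : List E} : ∀ {u w w'}, IsPath einit efin u w P →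
    IsPath einit efin u w' P → w = w' := by
  induction P with
  | nil => intro u w w' h h'; cases h; cases h'; rfl
  | cons e es ih => intro u w w' h h'; exact ih h.2 h'.2

lemma pathLam_append {lam : E → ℝ} (P₁ P₂ : List E) :
    pathLam lam (P₁ ++ P₂) = pathLam lam P₁ * pathLam lam P₂ := by
  simp [pathLam]

lemma pathF_append {g : E → ℝ} (P₁ P₂ : List E) :
    pathF g (P₁ ++ P₂) = pathF g P₁ + pathF g P₂ := by
  simp [pathF]

/-- the vertex reached from `u` after traversing `P`. -/
def vAfter (u : V) (P : List E) : V := P.foldl (fun _ e => efin e) u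

lemma vAfter_eq {P : List E} : ∀ {u v}, IsPath einit efin u v P → vAfter efin u P = v := by
  induction P with
  | nil => intro u v h; cases h; rfl
  | cons e es ih => intro u v h; exact ih h.2

lemma conv_sum_single {ι κ : Type*} (s : Finset ι) (t : Finset κ)
    (c : ι → ℝ) (d : κ → ℝ) (x : ι → ℝ) (y : κ → ℝ) :
    conv (∑ p ∈ s, c p • Finsupp.single (x p) (1 : ℝ))
         (∑ q ∈ t, d q • Finsupp.single (y q) (1 : ℝ)) =
    ∑ p ∈ s, ∑ q ∈ t, (c p * d q) • Finsupp.single (x p + y q) (1 : ℝ) := by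
  simp only [Finsupp.smul_single, smul_eq_mul, mul_one]
  unfold conv
  rw [← Finsupp.sum_finsetSum_index (by intro a; simp)
    (by intro a b₁ b₂; simp [add_mul, Finsupp.single_add, Finsupp.sum_add])]
  refine Finset.sum_congr rfl fun p _ => ?_
  rw [Finsupp.sum_single_index (by simp)]
  rw [← Finsupp.sum_finsetSum_index (by intro a; simp)
    (by intro a b₁ b₂; simp [mul_add, Finsupp.single_add])]
  refine Finset.sum_congr rfl fun q _ => ?_
  rw [Finsupp.sum_single_index (by simp)]

end Aux

/-- **Distribution decomposition** (part of Theorem 6). For any depth `0 ≤ i ≤ n`,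
the full trellis distribution `θ^D(T) = Σ_{P : A → B} λ(P) · δ_{f(P)}` satisfies
`θ^D(T) = Σ_{v : depth(v) = i} α^D(v) * β^D(v)` where `*` is convolution. -/
theorem theta_distribution_decomposition {V E : Type*} [Fintype V] [Fintype E]
    (einit efin : E → V) (depth : V → ℕ) (n : ℕ)
    (hdepth : ∀ e, depth (efin e) = depth (einit e) + 1)
    (A : V) (hA : depth A = 0) (B : V) (hB : depth B = n)
    (lam g : E → ℝ)
    (paths : V → V → Finset (List E))
    (hpaths : ∀ u v P, P ∈ paths u v ↔ IsPath einit efin u v P)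
    (i : ℕ) (hi : i ≤ n) :
    ∑ P ∈ paths A B, pathLam lam P • Finsupp.single (pathF g P) (1 : ℝ) =
      ∑ v ∈ Finset.univ.filter (fun v => depth v = i),
        conv (alphaDist lam g paths A v) (betaDist lam g paths B v) := by
  classical
  -- rewrite each convolution as a double sum over pairs of paths
  have key : ∀ v, conv (alphaDist lam g paths A v) (betaDist lam g paths B v) =
      ∑ P₁ ∈ paths A v, ∑ P₂ ∈ paths v B,
        (pathLam lam P₁ * pathLam lam P₂) • Finsupp.single (pathF g P₁ + pathF g P₂) (1 : ℝ) := by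
    intro v
    rw [alphaDist, betaDist, conv_sum_single]
  have key2 : ∀ v, conv (alphaDist lam g paths A v) (betaDist lam g paths B v) =
      ∑ q ∈ paths A v ×ˢ paths v B,
        (pathLam lam q.1 * pathLam lam q.2) • Finsupp.single (pathF g q.1 + pathF g q.2) (1 : ℝ) := by
    intro v; rw [key v, ← Finset.sum_product']
  simp only [key2]
  rw [Finset.sum_sigma']
  -- lengths of paths
  have hlenAB : ∀ P ∈ paths A B, P.length = n := by
    intro P hP
    have := depth_of_isPath einit efin depth hdepth ((hpaths A B P).1 hP)
    omega
  refine Finset.sum_bij'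
    (fun P _ => (⟨vAfter efin A (P.take i), (P.take i, P.drop i)⟩ :
      Σ _ : V, List E × List E))
    (fun q _ => q.2.1 ++ q.2.2) ?_ ?_ ?_ ?_ ?_
  · -- forward membership
    intro P hP
    have hP' := (hpaths A B P).1 hP
    have hP'' : IsPath einit efin A B (P.take i ++ P.drop i) := by
      rw [List.take_append_drop]; exact hP'
    obtain ⟨w, hw1, hw2⟩ := isPath_split einit efin hP''
    have hv : vAfter efin A (P.take i) = w := vAfter_eq einit efin hw1
    have hdw : depth w = i := by
      have := depth_of_isPath einit efin depth hdepth hw1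
      have hlen := hlenAB P hP
      rw [List.length_take] at this
      omega
    simp only [Finset.mem_sigma, Finset.mem_filter, Finset.mem_product]
    rw [hv]
    exact ⟨⟨Finset.mem_univ _, hdw⟩, (hpaths _ _ _).2 hw1, (hpaths _ _ _).2 hw2⟩
  · -- backward membership
    rintro ⟨v, P₁, P₂⟩ hq
    simp only [Finset.mem_sigma, Finset.mem_filter, Finset.mem_product] at hq
    exact (hpaths _ _ _).2 (isPath_append einit efin
      ((hpaths _ _ _).1 hq.2.1) ((hpaths _ _ _).1 hq.2.2))
  · -- left inverse
    intro P hP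
    exact List.take_append_drop i P
  · -- right inverse
    rintro ⟨v, P₁, P₂⟩ hq
    simp only [Finset.mem_sigma, Finset.mem_filter, Finset.mem_product] at hq
    have h₁ := (hpaths _ _ _).1 hq.2.1
    have h₂ := (hpaths _ _ _).1 hq.2.2
    have hlen : P₁.length = i := by
      have := depth_of_isPath einit efin depth hdepth h₁
      omega
    have htake : (P₁ ++ P₂).take i = P₁ := by
      rw [← hlen, List.take_left]
    have hdrop : (P₁ ++ P₂).drop i = P₂ := by
      rw [← hlen, List.drop_left]
    have hv : vAfter efin A P₁ = v := vAfter_eq einit efin h₁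
    dsimp only
    simp only [htake, hdrop, hv]
  · -- terms agree
    intro P hP
    dsimp only
    rw [← pathLam_append, ← pathF_append, List.take_append_drop]
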